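/- Let α ∈ (1, 2]. Then for all U, V ∈ ℝ^{m×n} and all c > 0, ‖U + V‖_F^α ≤ (1 + c)‖U‖_F^α + (2 + (α−1)^{α−1} c^{1−α})‖V‖_F^α. -/

import Mathlib

open Matrix Kronecker

/-- Spectral norm: ℓ²→ℓ² operator norm of a real matrix. -/
noncomputable def specNorm {ι κ : Type*} [Fintype ι] [Fintype κ] [DecidableEq κ]
    (A : Matrix ι κ ℝ) : ℝ :=
  ‖LinearMap.toContinuousLinearMap (Matrix.toEuclideanLin A)‖

/-- Nuclear norm: trace of the positive semidefinite square root of `Aᵀ * A`. -/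
noncomputable def nucNorm {ι κ : Type*} [Fintype ι] [Fintype κ] [DecidableEq κ]
    (A : Matrix ι κ ℝ) : ℝ :=
  Matrix.trace ((Matrix.posSemidef_conjTranspose_mul_self A).1.eigenvectorUnitary.1 *
    diagonal (Real.sqrt ∘ (Matrix.posSemidef_conjTranspose_mul_self A).1.eigenvalues) *
    (star (Matrix.posSemidef_conjTranspose_mul_self A).1.eigenvectorUnitary : Matrix κ κ ℝ))

/-- Frobenius norm. -/
noncomputable def frobNorm {ι κ : Type*} [Fintype ι] [Fintype κ] (A : Matrix ι κ ℝ) : ℝ :=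
  Real.sqrt (∑ i, ∑ j, (A i j) ^ 2)

/-- Trace inner product `⟨A, B⟩ = trace (Aᵀ B)`. -/
noncomputable def tin {ι κ : Type*} [Fintype ι] [Fintype κ] (A B : Matrix ι κ ℝ) : ℝ :=
  Matrix.trace (Aᵀ * B)

/-- Vertical stacking of `N` matrices of size `m × n`. -/
def vstack {N m n : ℕ} (Y : Fin N → Matrix (Fin m) (Fin n) ℝ) :
    Matrix (Fin N × Fin m) (Fin n) ℝ :=
  fun p j => Y p.1 p.2 j

section Helpers
open Real

lemma real_rpow_add_le {x y p : ℝ} (hx : 0 ≤ x) (hy : 0 ≤ y) (hp0 : 0 ≤ p) (hp1 : p ≤ 1) :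
    (x + y) ^ p ≤ x ^ p + y ^ p := by
  have h := NNReal.rpow_add_le_add_rpow x.toNNReal y.toNNReal hp0 hp1
  have := NNReal.coe_le_coe.2 h
  simpa [NNReal.coe_rpow, Real.coe_toNNReal, hx, hy, Real.toNNReal_add hx hy,
    Real.coe_toNNReal _ (add_nonneg hx hy)] using this

lemma scalar_ineq {α c a b : ℝ} (hα1 : 1 < α) (hα2 : α ≤ 2) (hc : 0 < c)
    (ha : 0 ≤ a) (hb : 0 ≤ b) :
    (a + b) ^ α ≤ (1 + c) * a ^ α + (2 + (α - 1) ^ (α - 1) * c ^ (1 - α)) * b ^ α := by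
  set β := α - 1 with hβdef
  have hβ0 : 0 < β := by simp [hβdef]; linarith
  have hβ1 : β ≤ 1 := by simp [hβdef]; linarith
  have h1c : (0:ℝ) < 1 + c := by linarith
  set θ : ℝ := (1 + c) ^ (-(1/β)) with hθdef
  have hθpos : 0 < θ := rpow_pos_of_pos h1c _
  have hrpow1 : (1:ℝ) < (1 + c) ^ (1/β) := by
    rw [one_lt_rpow_iff_of_pos h1c]
    left
    constructor <;> [linarith; positivity]
  have hθlt1 : θ < 1 := by
    rw [hθdef, rpow_neg h1c.le]
    exact inv_lt_one_of_one_lt₀ hrpow1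
  have h1θpos : 0 < 1 - θ := by linarith
  -- θ^(-β) = 1 + c
  have hθβ : θ ^ (-β) = 1 + c := by
    rw [hθdef, ← Real.rpow_mul h1c.le]
    rw [show -(1/β) * -β = 1 by field_simp, rpow_one]
  -- bound on (1-θ)^(-β)
  have hber : 1 + (1/β) * c ≤ (1 + c) ^ (1/β) :=
    one_add_mul_self_le_rpow_one_add (by linarith) (by rw [le_div_iff₀ hβ0]; linarith)
  have hθle : θ ≤ β / (β + c) := by
    rw [hθdef, rpow_neg h1c.le]
    rw [show β / (β + c) = (1 + (1/β) * c)⁻¹ by field_simp]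
    exact inv_anti₀ (by positivity) hber
  have hfrac : c / (β + c) ≤ 1 - θ := by
    have : β / (β + c) + c / (β + c) = 1 := by field_simp
    linarith
  have hfracpos : 0 < c / (β + c) := by positivity
  have hbound : (1 - θ) ^ (-β) ≤ 2 + β ^ β * c ^ (-β) := by
    have h1 : (1 - θ) ^ (-β) ≤ (c / (β + c)) ^ (-β) :=
      rpow_le_rpow_of_nonpos hfracpos hfrac (by linarith)
    have h2 : (c / (β + c)) ^ (-β) = (β / c + 1) ^ β := by
      rw [rpow_neg hfracpos.le, ← Real.inv_rpow hfracpos.le]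
      congr 1
      field_simp
    have h3 : (β / c + 1) ^ β ≤ (β / c) ^ β + 1 ^ β :=
      real_rpow_add_le (by positivity) zero_le_one hβ0.le hβ1
    have h4 : (β / c) ^ β = β ^ β * c ^ (-β) := by
      rw [Real.div_rpow hβ0.le hc.le, rpow_neg hc.le, div_eq_mul_inv]
    rw [one_rpow] at h3
    rw [h2] at h1
    have := h1.trans h3
    rw [h4] at this
    linarith
  -- convexity step
  have hkey := (convexOn_rpow hα1.le).2 (Set.mem_Ici.2 (show (0:ℝ) ≤ a/θ by positivity))
    (Set.mem_Ici.2 (show (0:ℝ) ≤ b/(1-θ) by positivity)) hθpos.le h1θpos.le (by ring)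
  simp only [smul_eq_mul] at hkey
  rw [mul_div_cancel₀ _ hθpos.ne', mul_div_cancel₀ _ h1θpos.ne'] at hkey
  have hdivθ : θ / θ ^ α = 1 + c := by
    calc θ / θ ^ α = θ ^ (1:ℝ) / θ ^ α := by rw [rpow_one]
      _ = θ ^ ((1:ℝ) - α) := (Real.rpow_sub hθpos 1 α).symm
      _ = θ ^ (-β) := by congr 1; rw [hβdef]; ring
      _ = 1 + c := hθβ
  have hdiv1θ : (1 - θ) / (1 - θ) ^ α = (1 - θ) ^ (-β) := by
    calc (1 - θ) / (1 - θ) ^ α = (1 - θ) ^ (1:ℝ) / (1 - θ) ^ α := by rw [rpow_one]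
      _ = (1 - θ) ^ ((1:ℝ) - α) := (Real.rpow_sub h1θpos 1 α).symm
      _ = (1 - θ) ^ (-β) := by congr 1; rw [hβdef]; ring
  have hL : θ * (a/θ) ^ α = (1 + c) * a ^ α := by
    rw [Real.div_rpow ha hθpos.le, ← hdivθ]; ring
  have hR : (1 - θ) * (b/(1 - θ)) ^ α = (1 - θ) ^ (-β) * b ^ α := by
    rw [Real.div_rpow hb h1θpos.le, ← hdiv1θ]; ring
  rw [hL, hR] at hkey
  have hcb : c ^ (1 - α) = c ^ (-β) := by congr 1; rw [hβdef]; ring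
  have hbα : (0:ℝ) ≤ b ^ α := rpow_nonneg hb α
  have : (1 - θ) ^ (-β) * b ^ α ≤ (2 + β ^ β * c ^ (-β)) * b ^ α :=
    mul_le_mul_of_nonneg_right hbound hbα
  rw [hcb, hβdef] at *
  linarith


lemma frob_eq {m n : ℕ} (A : Matrix (Fin m) (Fin n) ℝ) :
    frobNorm A = ‖(WithLp.equiv 2 (Fin m × Fin n → ℝ)).symm (fun p => A p.1 p.2)‖ := by
  rw [EuclideanSpace.norm_eq, frobNorm]
  congr 1
  rw [Fintype.sum_prod_type]
  simp [Real.norm_eq_abs, sq_abs]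

lemma frob_nonneg {m n : ℕ} (A : Matrix (Fin m) (Fin n) ℝ) : 0 ≤ frobNorm A :=
  Real.sqrt_nonneg _

lemma frob_triangle {m n : ℕ} (U V : Matrix (Fin m) (Fin n) ℝ) :
    frobNorm (U + V) ≤ frobNorm U + frobNorm V := by
  rw [frob_eq, frob_eq, frob_eq]
  have : (WithLp.equiv 2 (Fin m × Fin n → ℝ)).symm (fun p => (U + V) p.1 p.2)
      = (WithLp.equiv 2 (Fin m × Fin n → ℝ)).symm (fun p => U p.1 p.2)
        + (WithLp.equiv 2 (Fin m × Fin n → ℝ)).symm (fun p => V p.1 p.2) := by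
    ext p; simp [Matrix.add_apply]
  rw [this]
  exact norm_add_le _ _

end Helpers

theorem stmt2 {m n : ℕ} (α : ℝ) (hα1 : 1 < α) (hα2 : α ≤ 2) :
    ∀ (U V : Matrix (Fin m) (Fin n) ℝ) (c : ℝ), 0 < c →
      frobNorm (U + V) ^ α
        ≤ (1 + c) * frobNorm U ^ α
          + (2 + (α - 1) ^ (α - 1) * c ^ (1 - α)) * frobNorm V ^ α := by
  intro U V c hc
  calc frobNorm (U + V) ^ α
      ≤ (frobNorm U + frobNorm V) ^ α :=
        Real.rpow_le_rpow (frob_nonneg _) (frob_triangle U V) (by linarith)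
    _ ≤ _ := scalar_ineq hα1 hα2 hc (frob_nonneg U) (frob_nonneg V)
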